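/- Separation lemma: let Γ, Π ⇒ Σ, Δ be a K(A)-valid sequent such that no propositional variable occurs both in some formula of Γ ⊎ Δ and in some formula of Π ⊎ Σ. Then the sequents Γ ⇒ Δ and Π ⇒ Σ are both K(A)-valid. -/

import Mathlib

/-- Formulas of the modal-multiplicative language ℒ_Am□ : variables, → (`imp`)
and □ (`box`). -/
inductive FormM : Type
  | var : ℕ → FormM
  | imp : FormM → FormM → FormM
  | box : FormM → FormM
  deriving DecidableEq

/-- The defined constant `0̄ := p₀ → p₀` (with `p₀` the variable of index 0). -/
def zeroM : FormM := .imp (.var 0) (.var 0)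

/-- The defined negation `¬φ := φ → 0̄`. -/
def negM (φ : FormM) : FormM := .imp φ zeroM

/-- The defined connective `φ & ψ := ¬φ → ψ`. -/
def conjM (φ ψ : FormM) : FormM := .imp (negM φ) ψ

/-- The iterated conjunctions: `0φ := 0̄` and `(n+1)φ := φ & (nφ)`. -/
def iterM : ℕ → FormM → FormM
  | 0, _ => zeroM
  | n + 1, φ => conjM φ (iterM n φ)

/-- A K(A)-model: a nonempty set of worlds, an accessibility relation, and a
valuation of the variables bounded by some `r ≥ 0`. -/
structure KAModel where
  World : Type
  ne : Nonempty World
  R : World → World → Prop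
  V : ℕ → World → ℝ
  r : ℝ
  hr : 0 ≤ r
  hV : ∀ p x, V p x ∈ Set.Icc (-r) r

/-- The valuation extended to all ℒ_Am□-formulas.  Note that `sInf ∅ = 0` in `ℝ`,
matching the convention that the infimum of the empty set is `0`. -/
noncomputable def KAModel.val (M : KAModel) : FormM → M.World → ℝ
  | .var p, x => M.V p x
  | .imp φ ψ, x => M.val ψ x - M.val φ x
  | .box φ, x => sInf {v : ℝ | ∃ y, M.R x y ∧ M.val φ y = v}

/-- K(A)-validity of an ℒ_Am□-formula. -/
def KAValid (φ : FormM) : Prop := ∀ (M : KAModel) (x : M.World), 0 ≤ M.val φ x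

/-- `bigConj [φ₁, …, φₙ] = φ₁ & … & φₙ`, with the empty list interpreted as 0̄. -/
def bigConj : List FormM → FormM
  | [] => zeroM
  | [φ] => φ
  | φ :: ψ :: rest => conjM φ (bigConj (ψ :: rest))

/-- The formula interpretation `I(Γ ⇒ Δ) := (&Γ) → (&Δ)` of a sequent. -/
def interp (Γ Δ : List FormM) : FormM := .imp (bigConj Γ) (bigConj Δ)

/-- Occurrence of a propositional variable in an ℒ_Am□-formula. -/
def Occurs (p : ℕ) : FormM → Prop
  | .var q => p = q
  | .imp φ ψ => Occurs p φ ∨ Occurs p ψ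
  | .box φ => Occurs p φ

open Classical in
/-- The model `M` with all variables outside `S` zeroed out. -/
noncomputable def maskModel (M : KAModel) (S : ℕ → Prop) : KAModel where
  World := M.World
  ne := M.ne
  R := M.R
  V := fun p x => if S p then M.V p x else 0
  r := M.r
  hr := M.hr
  hV := by
    intro p x
    by_cases h : S p
    · simp [h, M.hV]
    · simp only [h, if_false, Set.mem_Icc]
      constructor <;> linarith [M.hr]

lemma val_zeroM (M : KAModel) (x : M.World) : M.val zeroM x = 0 := by
  simp [zeroM, KAModel.val]

lemma val_conjM (M : KAModel) (φ ψ : FormM) (x : M.World) :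
    M.val (conjM φ ψ) x = M.val φ x + M.val ψ x := by
  simp [conjM, negM, zeroM, KAModel.val]; ring

lemma val_bigConj (M : KAModel) : ∀ (L : List FormM) (x : M.World),
    M.val (bigConj L) x = (L.map fun φ => M.val φ x).sum
  | [], x => by simp [bigConj, val_zeroM]
  | [φ], x => by simp [bigConj]
  | φ :: ψ :: rest, x => by
    simp only [bigConj, val_conjM, List.map_cons, List.sum_cons]
    rw [val_bigConj M (ψ :: rest) x]
    simp

lemma maskModel_val_eq (M : KAModel) (S : ℕ → Prop) (φ : FormM)
    (h : ∀ p, Occurs p φ → S p) :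
    ∀ x, (maskModel M S).val φ x = M.val φ x := by
  induction φ with
  | var p =>
    intro x
    have : S p := h p rfl
    simp [KAModel.val, maskModel, this]
  | imp φ ψ ihφ ihψ =>
    intro x
    have hφ : ∀ p, Occurs p φ → S p := fun p hp => h p (Or.inl hp)
    have hψ : ∀ p, Occurs p ψ → S p := fun p hp => h p (Or.inr hp)
    simp [KAModel.val, ihφ hφ, ihψ hψ]
  | box φ ih =>
    intro x
    have hφ : ∀ p, Occurs p φ → S p := fun p hp => h p hp
    show sInf _ = sInf _
    congr 1
    ext v
    constructor
    · rintro ⟨y, hy, rfl⟩; exact ⟨y, hy, (ih hφ y).symm⟩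
    · rintro ⟨y, hy, rfl⟩; exact ⟨y, hy, ih hφ y⟩

lemma maskModel_val_zero (M : KAModel) (S : ℕ → Prop) (φ : FormM)
    (h : ∀ p, Occurs p φ → ¬ S p) :
    ∀ x, (maskModel M S).val φ x = 0 := by
  induction φ with
  | var p =>
    intro x
    have : ¬ S p := h p rfl
    simp [KAModel.val, maskModel, this]
  | imp φ ψ ihφ ihψ =>
    intro x
    have hφ : ∀ p, Occurs p φ → ¬ S p := fun p hp => h p (Or.inl hp)
    have hψ : ∀ p, Occurs p ψ → ¬ S p := fun p hp => h p (Or.inr hp)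
    simp [KAModel.val, ihφ hφ, ihψ hψ]
  | box φ ih =>
    intro x
    have hφ : ∀ p, Occurs p φ → ¬ S p := fun p hp => h p hp
    show sInf {v : ℝ | ∃ y, (maskModel M S).R x y ∧ (maskModel M S).val φ y = v} = 0
    have hsub : {v : ℝ | ∃ y, (maskModel M S).R x y ∧ (maskModel M S).val φ y = v}
        ⊆ {(0 : ℝ)} := by
      rintro v ⟨y, _, rfl⟩
      simp [ih hφ y]
    rcases Set.subset_singleton_iff_eq.1 hsub with he | he
    · rw [he, Real.sInf_empty]
    · rw [he, csInf_singleton]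

lemma sep_half (Γ Θ Λ Δ : List FormM)
    (hΓΔ : ∀ φ ∈ Γ ++ Δ, ∀ p, Occurs p φ → ¬ (∃ ψ ∈ Θ ++ Λ, Occurs p ψ))
    (hvalid : KAValid (interp (Γ ++ Θ) (Λ ++ Δ))) :
    KAValid (interp Γ Δ) := by
  intro M x
  set S : ℕ → Prop := fun p => ¬ (∃ ψ ∈ Θ ++ Λ, Occurs p ψ) with hS
  have key := hvalid (maskModel M S) x
  have hIn : ∀ φ ∈ Γ ++ Δ, (maskModel M S).val φ x = M.val φ x := fun φ hφ =>
    maskModel_val_eq M S φ (fun p hp => hΓΔ φ hφ p hp) x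
  have hOut : ∀ φ ∈ Θ ++ Λ, (maskModel M S).val φ x = 0 := fun φ hφ =>
    maskModel_val_zero M S φ (fun p hp hSp => hSp ⟨φ, hφ, hp⟩) x
  have hsum : ∀ (L : List FormM), (∀ φ ∈ L, (maskModel M S).val φ x = M.val φ x) →
      (maskModel M S).val (bigConj L) x = M.val (bigConj L) x := by
    intro L hL
    rw [val_bigConj, val_bigConj (maskModel M S) L x]
    congr 1
    exact List.map_congr_left hL
  have hsum0 : ∀ (L : List FormM), (∀ φ ∈ L, (maskModel M S).val φ x = 0) →
      (maskModel M S).val (bigConj L) x = 0 := by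
    intro L hL
    rw [val_bigConj (maskModel M S) L x]
    apply List.sum_eq_zero
    intro v hv
    rcases List.mem_map.1 hv with ⟨φ, hφ, rfl⟩
    exact hL φ hφ
  simp only [interp, KAModel.val] at key ⊢
  rw [val_bigConj (maskModel M S) (Λ ++ Δ) x, val_bigConj (maskModel M S) (Γ ++ Θ) x] at key
  rw [val_bigConj, val_bigConj]
  simp only [List.map_append, List.sum_append] at key
  have e1 : ((Γ.map fun φ => (maskModel M S).val φ x)).sum
      = (Γ.map fun φ => M.val φ x).sum := by
    congr 1; exact List.map_congr_left fun φ hφ => hIn φ (by simp [hφ])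
  have e2 : ((Δ.map fun φ => (maskModel M S).val φ x)).sum
      = (Δ.map fun φ => M.val φ x).sum := by
    congr 1; exact List.map_congr_left fun φ hφ => hIn φ (by simp [hφ])
  have e3 : ((Θ.map fun φ => (maskModel M S).val φ x)).sum = 0 := by
    apply List.sum_eq_zero
    intro v hv
    rcases List.mem_map.1 hv with ⟨φ, hφ, rfl⟩
    exact hOut φ (by simp [hφ])
  have e4 : ((Λ.map fun φ => (maskModel M S).val φ x)).sum = 0 := by
    apply List.sum_eq_zero
    intro v hv
    rcases List.mem_map.1 hv with ⟨φ, hφ, rfl⟩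
    exact hOut φ (by simp [hφ])
  rw [e1, e2, e3, e4] at key
  linarith

/-- Separation lemma: if Γ, Θ ⇒ Λ, Δ is K(A)-valid and no
variable occurs both in a formula of Γ ⊎ Δ and in a formula of Θ ⊎ Λ, then
Γ ⇒ Δ and Θ ⇒ Λ are both K(A)-valid. -/
theorem stmt_13 (Γ Θ Λ Δ : List FormM)
    (hdisj : ∀ p : ℕ,
      ¬ ((∃ φ ∈ Γ ++ Δ, Occurs p φ) ∧ (∃ φ ∈ Θ ++ Λ, Occurs p φ)))
    (hvalid : KAValid (interp (Γ ++ Θ) (Λ ++ Δ))) :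
    KAValid (interp Γ Δ) ∧ KAValid (interp Θ Λ) := by
  have hvalid' : KAValid (interp (Θ ++ Γ) (Δ ++ Λ)) := by
    intro M x
    have h := hvalid M x
    simp only [interp, KAModel.val, val_bigConj, List.map_append, List.sum_append] at h ⊢
    linarith
  constructor
  · exact sep_half Γ Θ Λ Δ
      (fun φ hφ p hp hmem => hdisj p ⟨⟨φ, hφ, hp⟩, hmem⟩) hvalid
  · exact sep_half Θ Γ Δ Λ
      (fun φ hφ p hp hmem => hdisj p ⟨hmem, ⟨φ, hφ, hp⟩⟩) hvalid'
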